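/- Fix a prime p. The number of elements α ∈ ℤ[1/p] with absolute Weil height H(α) ≤ 𝓗 equals (2/log p)(1 − 1/p) 𝓗 log 𝓗 + O_p(𝓗) as 𝓗 → ∞. -/

import Mathlib

set_option maxHeartbeats 1000000


open Finset

-- multiples of p in [-n, n]
lemma mult_count (p : ℕ) (hp : 0 < p) (n : ℕ) :
    ((Finset.Icc (-(n:ℤ)) n).filter fun a => (p:ℤ) ∣ a).card = 2*(n/p)+1 := by
  have hpz : (0:ℤ) < p := by exact_mod_cast hp
  have himg : ((Finset.Icc (-(n:ℤ)) n).filter fun a => (p:ℤ) ∣ a)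
      = (Finset.Icc (-((n:ℤ)/p)) ((n:ℤ)/p)).image (fun k => (p:ℤ) * k) := by
    ext a
    simp only [mem_filter, mem_Icc, mem_image]
    constructor
    · rintro ⟨⟨h1, h2⟩, k, rfl⟩
      refine ⟨k, ⟨?_, ?_⟩, rfl⟩
      · rw [neg_le] at h1 ⊢
        rw [Int.le_ediv_iff_mul_le hpz]
        nlinarith
      · rw [Int.le_ediv_iff_mul_le hpz]; nlinarith
    · rintro ⟨k, ⟨h1, h2⟩, rfl⟩
      rw [Int.le_ediv_iff_mul_le hpz] at h2
      rw [neg_le, Int.le_ediv_iff_mul_le hpz] at h1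
      exact ⟨⟨by nlinarith, by nlinarith⟩, k, rfl⟩
  rw [himg, Finset.card_image_of_injective _ (mul_right_injective₀ hpz.ne'),
    Int.card_Icc]
  have h0 : (0:ℤ) ≤ (n:ℤ)/p := Int.ediv_nonneg (by positivity) hpz.le
  have : ((n:ℤ)/p) = ((n/p : ℕ) : ℤ) := by exact (Int.natCast_div n p).symm
  rw [this]
  omega

lemma cop_count (p : ℕ) (hp : p.Prime) (n j : ℕ) (hj : 0 < j) :
    ((Finset.Icc (-(n:ℤ)) n).filter fun a => a.natAbs.Coprime (p^j)).card
      = 2*(n - n/p) := by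
  have hiff : ∀ a : ℤ, a.natAbs.Coprime (p^j) ↔ ¬ ((p:ℤ) ∣ a) := by
    intro a
    rw [Nat.coprime_pow_right_iff hj, Nat.coprime_comm,
      hp.coprime_iff_not_dvd, Int.natCast_dvd]
  have := Finset.card_filter_add_card_filter_not
    (s := Finset.Icc (-(n:ℤ)) n) (p := fun a => (p:ℤ) ∣ a)
  rw [mult_count p hp.pos n, Int.card_Icc] at this
  have heq : ((Finset.Icc (-(n:ℤ)) n).filter fun a => a.natAbs.Coprime (p^j))
      = ((Finset.Icc (-(n:ℤ)) n).filter fun a => ¬ ((p:ℤ) ∣ a)) := by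
    apply Finset.filter_congr; intro a _; simp [hiff a]
  rw [heq]
  have hc : ((n:ℤ) + 1 - -(n:ℤ)).toNat = 2*n+1 := by omega
  rw [hc] at this
  have hnp : n / p ≤ n := Nat.div_le_self n p
  omega

lemma count_main (p : ℕ) (hp : p.Prime) (n : ℕ) (hn : 1 ≤ n) :
    Nat.card {α : ℚ | (∃ j : ℕ, α.den = p ^ j) ∧ |α.num| ≤ (n:ℤ) ∧ α.den ≤ n}
      = (2*n+1) + (Nat.log p n) * (2*(n - n/p)) := by
  set J := Nat.log p n with hJ
  set F : Finset (ℕ × ℤ) := (Finset.range (J+1)).biUnion (fun j =>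
    ((Finset.Icc (-(n:ℤ)) n).filter fun a => a.natAbs.Coprime (p^j)).image
      fun a => (j, a)) with hF
  have hmem : ∀ x : ℕ × ℤ, x ∈ F ↔
      x.1 ≤ J ∧ (-(n:ℤ) ≤ x.2 ∧ x.2 ≤ n) ∧ x.2.natAbs.Coprime (p^x.1) := by
    rintro ⟨j, a⟩
    simp only [hF, Finset.mem_biUnion, Finset.mem_range, Finset.mem_image,
      Finset.mem_filter, Finset.mem_Icc, Prod.mk.injEq]
    constructor
    · rintro ⟨j', hj', a', ⟨⟨h1, h2⟩, h3⟩, rfl, rfl⟩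
      exact ⟨by omega, ⟨h1, h2⟩, h3⟩
    · rintro ⟨h1, ⟨h2, h3⟩, h4⟩
      exact ⟨j, by omega, a, ⟨⟨h2, h3⟩, h4⟩, rfl, rfl⟩
  set f : ℕ × ℤ → ℚ := fun x => ((x.2 : ℚ) / (((p:ℤ)^x.1 : ℤ) : ℚ)) with hf
  have hpow_pos : ∀ j : ℕ, (0:ℤ) < (p:ℤ)^j := fun j => pow_pos (by exact_mod_cast hp.pos) j
  have habs : ∀ j : ℕ, ((p:ℤ)^j).natAbs = p^j := fun j => by
    simp [Int.natAbs_pow]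
  have hnum : ∀ x : ℕ × ℤ, x.2.natAbs.Coprime (p^x.1) → (f x).num = x.2 := by
    intro x hc
    exact Rat.num_div_eq_of_coprime (hpow_pos x.1) (by rw [habs]; exact hc)
  have hden : ∀ x : ℕ × ℤ, x.2.natAbs.Coprime (p^x.1) → (f x).den = p^x.1 := by
    intro x hc
    have h2 : (((x.2 : ℚ) / (((p:ℤ)^x.1 : ℤ) : ℚ)).den : ℤ) = (p:ℤ)^x.1 :=
      Rat.den_div_eq_of_coprime (hpow_pos x.1) (by rw [habs]; exact hc)
    have h3 : ((f x).den : ℤ) = (p:ℤ)^x.1 := h2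
    exact_mod_cast h3
  have hS : {α : ℚ | (∃ j : ℕ, α.den = p ^ j) ∧ |α.num| ≤ (n:ℤ) ∧ α.den ≤ n}
      = ↑(F.image f) := by
    ext α
    simp only [Set.mem_setOf_eq, Finset.coe_image, Set.mem_image, Finset.mem_coe]
    constructor
    · rintro ⟨⟨j, hdj⟩, hnle, hdle⟩
      refine ⟨(j, α.num), ?_, ?_⟩
      · rw [hmem]
        refine ⟨?_, ?_, ?_⟩
        · rw [Nat.le_log_iff_pow_le hp.one_lt (by omega), ← hdj]; exact hdle
        · exact abs_le.mp hnle
        · rw [← hdj]; exact α.reduced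
      · show ((α.num : ℚ) / (((p:ℤ)^j : ℤ) : ℚ)) = α
        have : ((p:ℤ)^j : ℤ) = (α.den : ℤ) := by exact_mod_cast hdj.symm
        rw [this]
        exact_mod_cast Rat.num_div_den α
    · rintro ⟨x, hx, rfl⟩
      rw [hmem] at hx
      obtain ⟨h1, ⟨h2, h3⟩, h4⟩ := hx
      refine ⟨⟨x.1, hden x h4⟩, ?_, ?_⟩
      · rw [hnum x h4]; exact abs_le.mpr ⟨h2, h3⟩
      · rw [hden x h4]
        calc p^x.1 ≤ p^J := Nat.pow_le_pow_right hp.pos h1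
        _ ≤ n := Nat.pow_log_le_self p (by omega)
  rw [hS]
  rw [Nat.card_coe_set_eq, Set.ncard_coe_finset, Finset.card_image_of_injOn, hF]
  · rw [Finset.card_biUnion]
    · have hterm : ∀ j ∈ Finset.range (J+1),
          (((Finset.Icc (-(n:ℤ)) n).filter fun a => a.natAbs.Coprime (p^j)).image
            (fun a => ((j, a) : ℕ × ℤ))).card
          = ((Finset.Icc (-(n:ℤ)) n).filter fun a => a.natAbs.Coprime (p^j)).card := by
        intro j _
        exact Finset.card_image_of_injective _ (fun a b h => by
          simpa using h)
      rw [Finset.sum_congr rfl hterm, Finset.sum_range_succ']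
      have h0 : ((Finset.Icc (-(n:ℤ)) n).filter fun a => a.natAbs.Coprime (p^0)).card
          = 2*n+1 := by
        have he : (Finset.Icc (-(n:ℤ)) n).filter (fun a => a.natAbs.Coprime (p^0))
            = Finset.Icc (-(n:ℤ)) n := by
          apply Finset.filter_true_of_mem; intro a _; simp [Nat.coprime_one_right]
        rw [he, Int.card_Icc]; omega
      have hsucc : ∀ i : ℕ,
          ((Finset.Icc (-(n:ℤ)) n).filter fun a => a.natAbs.Coprime (p^(i+1))).card
          = 2*(n - n/p) := fun i => cop_count p hp n (i+1) (Nat.succ_pos i)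
      rw [h0]
      rw [Finset.sum_congr rfl (fun i _ => hsucc i), Finset.sum_const, smul_eq_mul,
        Finset.card_range]
      ring
    · intro j1 _ j2 _ hne
      simp only [Finset.disjoint_left, Finset.mem_image]
      rintro x ⟨a, _, rfl⟩ ⟨b, _, hb⟩
      exact hne (by simpa using (Prod.mk.injEq _ _ _ _ ▸ hb).1.symm)
  · intro x hx y hy hxy
    rw [Finset.mem_coe, hmem] at hx hy
    have hnx := hnum x hx.2.2; have hny := hnum y hy.2.2
    have hdx := hden x hx.2.2; have hdy := hden y hy.2.2
    have h2 : x.2 = y.2 := by rw [← hnx, ← hny, hxy]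
    have h1 : p^x.1 = p^y.1 := by rw [← hdx, ← hdy, hxy]
    have h1' : x.1 = y.1 := Nat.pow_right_injective hp.two_le h1
    exact Prod.ext h1' h2


/-- for a fixed prime `p`, the number of elements `α ∈ ℤ[1/p]`
(rationals whose denominator is a power of `p`) of absolute Weil height
`H(α) = max{|num α|, den α} ≤ 𝓗` equals
`(2/log p)(1 − 1/p) 𝓗 log 𝓗 + O_p(𝓗)` as `𝓗 → ∞`. -/
theorem count_Z_inv_p_of_bounded_height (p : ℕ) (hp : p.Prime) :
    ∃ C : ℝ, 0 < C ∧ ∃ H₀ : ℝ, ∀ H : ℝ, H₀ ≤ H →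
      |(Nat.card {α : ℚ | (∃ j : ℕ, α.den = p ^ j) ∧
          max |(α.num : ℝ)| (α.den : ℝ) ≤ H} : ℝ) -
        (2 / Real.log p) * (1 - 1 / (p : ℝ)) * H * Real.log H| ≤ C * H := by
  refine ⟨20, by norm_num, 2, fun H hH => ?_⟩
  have hH1 : (1:ℝ) ≤ H := by linarith
  have hH0 : (0:ℝ) ≤ H := by linarith
  have hHpos : (0:ℝ) < H := by linarith
  set n := ⌊H⌋₊ with hn
  have hn1 : 1 ≤ n := Nat.le_floor (by exact_mod_cast hH1)
  -- rewrite the set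
  have hset : {α : ℚ | (∃ j : ℕ, α.den = p ^ j) ∧ max |(α.num : ℝ)| (α.den : ℝ) ≤ H}
      = {α : ℚ | (∃ j : ℕ, α.den = p ^ j) ∧ |α.num| ≤ (n:ℤ) ∧ α.den ≤ n} := by
    ext α
    simp only [Set.mem_setOf_eq, max_le_iff]
    refine and_congr_right fun _ => and_congr ?_ ?_
    · rw [← Int.cast_abs, ← Int.le_floor, ← Int.natCast_floor_eq_floor hH0]
    · exact (Nat.le_floor_iff hH0).symm
  rw [hset, count_main p hp n hn1]
  -- real analysis
  set J := Nat.log p n with hJdef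
  set q := n / p with hq
  have hqn : q ≤ n := Nat.div_le_self n p
  have hp1 : (1:ℝ) < p := by exact_mod_cast hp.one_lt
  have hp2 : (2:ℝ) ≤ p := by exact_mod_cast hp.two_le
  set lp := Real.log p with hlp
  have hlppos : 0 < lp := Real.log_pos hp1
  have hlphalf : (1:ℝ)/2 < lp := by
    have h2 : Real.log 2 ≤ lp := Real.log_le_log (by norm_num) hp2
    have := Real.log_two_gt_d9
    linarith
  set L := Real.log H with hL
  have hL0 : 0 ≤ L := Real.log_nonneg hH1
  have hLH : L ≤ H := by
    have := Real.log_le_sub_one_of_pos hHpos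
    linarith
  have hfl : (n:ℝ) ≤ H := Nat.floor_le hH0
  have hfl2 : H < (n:ℝ) + 1 := Nat.lt_floor_add_one H
  -- J bounds
  have hpJ : ((p:ℕ)^J : ℝ) ≤ (n:ℝ) := by
    exact_mod_cast Nat.cast_le.mpr (Nat.pow_log_le_self p (by omega))
  have hpJ2 : ((n:ℝ) + 1) ≤ ((p:ℕ)^(J+1) : ℝ) := by
    have h := Nat.lt_pow_succ_log_self hp.one_lt n
    exact_mod_cast Nat.cast_le.mpr h
  have hJle : (J:ℝ) * lp ≤ L := by
    have h1 : Real.log ((p:ℝ)^J) ≤ L := by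
      apply Real.log_le_log (by positivity)
      calc (p:ℝ)^J = ((p:ℕ)^J : ℝ) := by push_cast; ring
        _ ≤ (n:ℝ) := hpJ
        _ ≤ H := hfl
    rwa [Real.log_pow] at h1
  have hJge : L < ((J:ℝ) + 1) * lp := by
    have h1 : L < Real.log ((p:ℝ)^(J+1)) := by
      apply Real.log_lt_log hHpos
      calc H < (n:ℝ) + 1 := hfl2
        _ ≤ ((p:ℕ)^(J+1) : ℝ) := hpJ2
        _ = (p:ℝ)^(J+1) := by push_cast; ring
    rw [Real.log_pow] at h1
    push_cast at h1
    linarith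
  set x := L / lp with hx
  have hxJ : (J:ℝ) ≤ x := by
    rw [hx, le_div_iff₀ hlppos]; exact hJle
  have hxJ2 : x ≤ (J:ℝ) + 1 := by
    rw [hx, div_le_iff₀ hlppos]; nlinarith
  have hx2H : x ≤ 2 * H := by
    rw [hx, div_le_iff₀ hlppos]; nlinarith
  have hJ0 : (0:ℝ) ≤ (J:ℝ) := Nat.cast_nonneg J
  have hJ2H : (J:ℝ) ≤ 2 * H := le_trans hxJ hx2H
  -- q bounds
  have hppos : (0:ℝ) < p := by linarith
  have hdm : p * q + n % p = n := by rw [hq]; exact Nat.div_add_mod n p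
  have hmod := Nat.mod_lt n hp.pos
  have hq1 : (p:ℝ) * (q:ℝ) ≤ (n:ℝ) := by
    have : p * q ≤ n := by omega
    exact_mod_cast this
  have hq2 : (n:ℝ) < (p:ℝ) * (q:ℝ) + (p:ℝ) := by
    have : n < p * q + p := by omega
    exact_mod_cast this
  have hqle : (q:ℝ) ≤ H / p := by
    rw [le_div_iff₀ hppos]; nlinarith
  have hqge : H / p - 2 ≤ (q:ℝ) := by
    rw [sub_le_iff_le_add, div_le_iff₀ hppos]
    nlinarith [hq2, hfl2]
  -- set c
  set c : ℝ := 1 - 1/(p:ℝ) with hc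
  have hc0 : 0 ≤ c := by
    rw [hc]; have : 1/(p:ℝ) ≤ 1 := by rw [div_le_one hppos]; linarith
    linarith
  have hc1 : c ≤ 1 := by
    rw [hc]; have : 0 < 1/(p:ℝ) := by positivity
    linarith
  set mR : ℝ := (n:ℝ) - (q:ℝ) with hm
  have hmR : |mR - c * H| ≤ 3 := by
    rw [abs_le]
    have hcH : c * H = H - H / p := by rw [hc]; field_simp
    constructor
    · rw [hm, hcH]; linarith [hfl2, hqle]
    · rw [hm, hcH]; linarith [hfl, hqge]
  -- main bound
  have hkey : |2*(J:ℝ)*mR - 2*c*H*x| ≤ 14 * H := by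
    have he : 2*(J:ℝ)*mR - 2*c*H*x = 2*(J:ℝ)*(mR - c*H) + 2*(c*H)*((J:ℝ) - x) := by
      ring
    rw [he]
    have h1 : |2*(J:ℝ)*(mR - c*H)| ≤ 12 * H := by
      rw [abs_mul, abs_of_nonneg (by positivity : (0:ℝ) ≤ 2*(J:ℝ))]
      have hmul := mul_le_mul (by linarith : 2*(J:ℝ) ≤ 4*H) hmR
        (abs_nonneg _) (by positivity)
      linarith
    have h2 : |2*(c*H)*((J:ℝ) - x)| ≤ 2 * H := by
      rw [abs_mul, abs_of_nonneg (by positivity : (0:ℝ) ≤ 2*(c*H))]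
      have hJx : |(J:ℝ) - x| ≤ 1 := abs_le.mpr ⟨by linarith, by linarith⟩
      have hch : c * H ≤ H := by nlinarith
      have hch0 : 0 ≤ c * H := by positivity
      have hmul := mul_le_mul_of_nonneg_left hJx (by linarith : (0:ℝ) ≤ 2*(c*H))
      linarith
    calc _ ≤ |2*(J:ℝ)*(mR - c*H)| + |2*(c*H)*((J:ℝ) - x)| := abs_add_le _ _
      _ ≤ 14 * H := by linarith
  have hcast : ((2*n+1 + J * (2*(n - q)) : ℕ) : ℝ)
      = 2*(n:ℝ) + 1 + 2*(J:ℝ)*mR := by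
    push_cast [Nat.cast_sub hqn]
    ring
  have hM : (2 / lp) * c * H * L = 2*c*H*x := by
    rw [hx]; field_simp
  rw [hcast, hM]
  have : 2*(n:ℝ) + 1 + 2*(J:ℝ)*mR - 2*c*H*x
      = (2*(n:ℝ) + 1) + (2*(J:ℝ)*mR - 2*c*H*x) := by ring
  rw [this]
  calc |(2*(n:ℝ) + 1) + (2*(J:ℝ)*mR - 2*c*H*x)|
      ≤ |2*(n:ℝ) + 1| + |2*(J:ℝ)*mR - 2*c*H*x| := abs_add_le _ _
    _ ≤ (2*H + 1) + 14*H := by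
        have : |2*(n:ℝ) + 1| = 2*(n:ℝ)+1 := abs_of_nonneg (by positivity)
        rw [this]; linarith
    _ ≤ 20 * H := by linarith
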